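/- If f : U → ℂ is holomorphic on an open set U and ρ_f(z) = (4/e²)·|f′(z)|²/(1−|f(z)|²)² is defined wherever |f(z)| ≠ 1, then ρ_f satisfies Δ ln √(ρ_f) − e² ρ_f = 0 on the set where f′ ≠ 0 and |f| ≠ 1. -/

import Mathlib

/-- The Euclidean Laplacian ∂²/∂x² + ∂²/∂y² of a function on ℂ ≅ ℝ². -/
noncomputable def laplacian (ρ : ℂ → ℝ) (z : ℂ) : ℝ :=
  fderiv ℝ (fun w => fderiv ℝ ρ w 1) z 1 +
  fderiv ℝ (fun w => fderiv ℝ ρ w Complex.I) z Complex.I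

open Complex ContinuousLinearMap

/-- The Laplacian only depends on the germ of the function. -/
lemma laplacian_congr (F G : ℂ → ℝ) (z : ℂ) (h : F =ᶠ[nhds z] G) :
    laplacian F z = laplacian G z := by
  have h1 : fderiv ℝ F =ᶠ[nhds z] fderiv ℝ G := h.fderiv
  have h2 : ∀ v : ℂ, (fun w => fderiv ℝ F w v) =ᶠ[nhds z] (fun w => fderiv ℝ G w v) :=
    fun v => h1.mono (fun w hw => by show fderiv ℝ F w v = fderiv ℝ G w v; rw [hw])
  unfold laplacian
  rw [(h2 1).fderiv_eq, (h2 Complex.I).fderiv_eq]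

/-- derivative of w ↦ normSq (g w) -/
lemma hasFDerivAt_normSq_comp (g : ℂ → ℂ) (w : ℂ) (hg : DifferentiableAt ℂ g w) :
    HasFDerivAt (fun x => normSq (g x))
      ((2:ℝ) • (Complex.reCLM.comp ((ContinuousLinearMap.mul ℝ ℂ ((starRingEnd ℂ) (g w) * deriv g w)).restrictScalars ℝ))) w := by
  have hF : HasFDerivAt g ((ContinuousLinearMap.smulRight (1 : ℂ →L[ℂ] ℂ) (deriv g w)).restrictScalars ℝ) w :=
    (hg.hasDerivAt.hasFDerivAt).restrictScalars ℝ
  have hre : HasFDerivAt (fun x => (g x).re) (Complex.reCLM.comp ((ContinuousLinearMap.smulRight (1 : ℂ →L[ℂ] ℂ) (deriv g w)).restrictScalars ℝ)) w :=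
    (Complex.reCLM.hasFDerivAt).comp w hF
  have him : HasFDerivAt (fun x => (g x).im) (Complex.imCLM.comp ((ContinuousLinearMap.smulRight (1 : ℂ →L[ℂ] ℂ) (deriv g w)).restrictScalars ℝ)) w :=
    (Complex.imCLM.hasFDerivAt).comp w hF
  have H := (hre.mul hre).add (him.mul him)
  have heq : (fun x => normSq (g x)) = (fun x => (g x).re * (g x).re + (g x).im * (g x).im) := by
    funext x; simp [normSq_apply]
  rw [heq]
  refine H.congr_fderiv ?_
  ext v
  simp [Complex.mul_re, Complex.mul_im]
  ring

/-- derivative of w ↦ log (c - normSq (g w)) -/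
lemma hasFDerivAt_log_normSq (g : ℂ → ℂ) (c : ℝ) (w : ℂ) (hg : DifferentiableAt ℂ g w)
    (ht : c - normSq (g w) ≠ 0) :
    HasFDerivAt (fun x => Real.log (c - normSq (g x)))
      (((c - normSq (g w))⁻¹ * (-2)) • (Complex.reCLM.comp
        ((ContinuousLinearMap.mul ℝ ℂ ((starRingEnd ℂ) (g w) * deriv g w)).restrictScalars ℝ))) w := by
  have hn := hasFDerivAt_normSq_comp g w hg
  have hs := hn.const_sub c
  have H := (Real.hasDerivAt_log ht).comp_hasFDerivAt w hs
  refine H.congr_fderiv ?_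
  ext v
  simp
  ring

/-- coordinate form of the first-derivative coefficient function -/
lemma coord_eq (g : ℂ → ℂ) (c : ℝ) (v : ℂ) :
    (fun w => ((c - normSq (g w))⁻¹ * (-2)) * (((starRingEnd ℂ) (g w)) * deriv g w * v).re)
    = fun w => ((c - ((g w).re * (g w).re + (g w).im * (g w).im))⁻¹ * (-2)) *
        (((g w).re * (deriv g w).re + (g w).im * (deriv g w).im) * v.re
          - ((g w).re * (deriv g w).im - (g w).im * (deriv g w).re) * v.im) := by
  funext w
  simp only [Complex.mul_re, Complex.mul_im, normSq_apply, Complex.conj_re, Complex.conj_im]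
  ring

lemma second_aux (g : ℂ → ℂ) (c : ℝ) (z : ℂ) (hg : DifferentiableAt ℂ g z)
    (hg' : DifferentiableAt ℂ (deriv g) z) (ht : c - normSq (g z) ≠ 0) (v u : ℂ) :
    ∃ D : ℂ →L[ℝ] ℝ, HasFDerivAt
      (fun w => ((c - ((g w).re * (g w).re + (g w).im * (g w).im))⁻¹ * (-2)) *
        (((g w).re * (deriv g w).re + (g w).im * (deriv g w).im) * v.re
          - ((g w).re * (deriv g w).im - (g w).im * (deriv g w).re) * v.im)) D z ∧
      D u = (-4 * ((c - normSq (g z))⁻¹)^2 * ((starRingEnd ℂ) (g z) * deriv g z * u).re)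
              * ((starRingEnd ℂ) (g z) * deriv g z * v).re
            + ((c - normSq (g z))⁻¹ * (-2)) *
              (((starRingEnd ℂ) (u * deriv g z) * deriv g z * v).re
                + ((starRingEnd ℂ) (g z) * (u * deriv (deriv g) z) * v).re) := by
  have hgR : HasFDerivAt g ((ContinuousLinearMap.smulRight (1 : ℂ →L[ℂ] ℂ) (deriv g z)).restrictScalars ℝ) z :=
    (hg.hasDerivAt.hasFDerivAt).restrictScalars ℝ
  have hdR : HasFDerivAt (deriv g) ((ContinuousLinearMap.smulRight (1 : ℂ →L[ℂ] ℂ) (deriv (deriv g) z)).restrictScalars ℝ) z :=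
    (hg'.hasDerivAt.hasFDerivAt).restrictScalars ℝ
  have hre_g : HasFDerivAt (fun w => (g w).re)
      (Complex.reCLM.comp ((ContinuousLinearMap.smulRight (1 : ℂ →L[ℂ] ℂ) (deriv g z)).restrictScalars ℝ)) z :=
    (Complex.reCLM.hasFDerivAt).comp z hgR
  have him_g : HasFDerivAt (fun w => (g w).im)
      (Complex.imCLM.comp ((ContinuousLinearMap.smulRight (1 : ℂ →L[ℂ] ℂ) (deriv g z)).restrictScalars ℝ)) z :=
    (Complex.imCLM.hasFDerivAt).comp z hgR
  have hre_d : HasFDerivAt (fun w => (deriv g w).re)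
      (Complex.reCLM.comp ((ContinuousLinearMap.smulRight (1 : ℂ →L[ℂ] ℂ) (deriv (deriv g) z)).restrictScalars ℝ)) z :=
    (Complex.reCLM.hasFDerivAt).comp z hdR
  have him_d : HasFDerivAt (fun w => (deriv g w).im)
      (Complex.imCLM.comp ((ContinuousLinearMap.smulRight (1 : ℂ →L[ℂ] ℂ) (deriv (deriv g) z)).restrictScalars ℝ)) z :=
    (Complex.imCLM.hasFDerivAt).comp z hdR
  have ht' : c - ((g z).re * (g z).re + (g z).im * (g z).im) ≠ 0 := by
    simpa [normSq_apply] using ht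
  have hq0 := (((hre_g.mul hre_g).add (him_g.mul him_g)).const_sub c)
  have hqi := (hasFDerivAt_inv' ht').comp z hq0
  have hq := hqi.mul_const (-2 : ℝ)
  have hA := (hre_g.mul hre_d).add (him_g.mul him_d)
  have hB := (hre_g.mul him_d).sub (him_g.mul hre_d)
  have hr := (hA.mul_const v.re).sub (hB.mul_const v.im)
  have H := hq.mul hr
  refine ⟨_, H, ?_⟩
  simp only [ContinuousLinearMap.add_apply, ContinuousLinearMap.smul_apply,
    ContinuousLinearMap.sub_apply, ContinuousLinearMap.comp_apply,
    ContinuousLinearMap.coe_restrictScalars',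
    ContinuousLinearMap.smulRight_apply, ContinuousLinearMap.one_apply,
    Complex.reCLM_apply, Complex.imCLM_apply, ContinuousLinearMap.neg_apply,
    smul_eq_mul, Complex.smul_re, Complex.smul_im, Complex.mul_re, Complex.mul_im,
    Complex.conj_re, Complex.conj_im, normSq_apply, Function.comp_apply, Function.comp,
    ContinuousLinearMap.mulLeftRight_apply]
  simp only [Pi.add_apply, Pi.pow_apply, Pi.mul_apply, Pi.sub_apply]
  ring

/-- The value of the second-derivative formula summed over directions 1 and I. -/
lemma second_eval (g : ℂ → ℂ) (c : ℝ) (z : ℂ) (ht : c - normSq (g z) ≠ 0) :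
    ((-4 * ((c - normSq (g z))⁻¹)^2 * ((starRingEnd ℂ) (g z) * deriv g z * 1).re)
              * ((starRingEnd ℂ) (g z) * deriv g z * 1).re
            + ((c - normSq (g z))⁻¹ * (-2)) *
              (((starRingEnd ℂ) (1 * deriv g z) * deriv g z * 1).re
                + ((starRingEnd ℂ) (g z) * (1 * deriv (deriv g) z) * 1).re))
    + ((-4 * ((c - normSq (g z))⁻¹)^2 * ((starRingEnd ℂ) (g z) * deriv g z * Complex.I).re)
              * ((starRingEnd ℂ) (g z) * deriv g z * Complex.I).re
            + ((c - normSq (g z))⁻¹ * (-2)) *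
              (((starRingEnd ℂ) (Complex.I * deriv g z) * deriv g z * Complex.I).re
                + ((starRingEnd ℂ) (g z) * (Complex.I * deriv (deriv g) z) * Complex.I).re))
    = -4 * c * normSq (deriv g z) / (c - normSq (g z))^2 := by
  have ht' : c - ((g z).re * (g z).re + (g z).im * (g z).im) ≠ 0 := by
    simpa [normSq_apply] using ht
  simp only [Complex.mul_re, Complex.mul_im, Complex.conj_re, Complex.conj_im,
    Complex.one_re, Complex.one_im, Complex.I_re, Complex.I_im, normSq_apply]
  field_simp
  ring

theorem liouville_density_case_II (e : ℝ) (he : 0 < e) (U : Set ℂ) (hU : IsOpen U)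
    (f : ℂ → ℂ) (hf : DifferentiableOn ℂ f U)
    (ρ : ℂ → ℝ)
    (hρ : ∀ z, ρ z = 4 / e ^ 2 * ‖deriv f z‖ ^ 2 / (1 - ‖f z‖ ^ 2) ^ 2) :
    ∀ z ∈ U, deriv f z ≠ 0 → ‖f z‖ ≠ 1 →
      laplacian (fun w => Real.log (Real.sqrt (ρ w))) z - e ^ 2 * ρ z = 0 := by
  intro z hzU hdz hnz
  have hfa : AnalyticOnNhd ℂ f U := hf.analyticOnNhd hU
  have hfd : AnalyticOnNhd ℂ (deriv f) U := hfa.deriv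
  have hfdd : AnalyticOnNhd ℂ (deriv (deriv f)) U := hfd.deriv
  -- the open set V where everything is nice
  set V : Set ℂ := (U ∩ (deriv f) ⁻¹' ({0}ᶜ)) ∩ ((fun w => normSq (f w)) ⁻¹' ({1}ᶜ)) ∩ U with hVdef
  have hVopen : IsOpen V := by
    have h1 : IsOpen (U ∩ (deriv f) ⁻¹' ({0}ᶜ)) :=
      hfd.continuousOn.isOpen_inter_preimage hU isOpen_compl_singleton
    have h2 : ContinuousOn (fun w => normSq (f w)) (U ∩ (deriv f) ⁻¹' ({0}ᶜ)) :=
      (Complex.continuous_normSq.comp_continuousOn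
        (hfa.continuousOn.mono Set.inter_subset_left))
    exact ((h2.isOpen_inter_preimage h1 isOpen_compl_singleton).inter hU)
  have hns_norm : ∀ ζ : ℂ, normSq ζ = ‖ζ‖^2 := fun ζ => by
    rw [Complex.normSq_eq_norm_sq]
  have hnsz : normSq (f z) ≠ 1 := by
    intro h
    apply hnz
    have h2 : ‖f z‖ ^ 2 = 1 := by rw [← hns_norm]; exact h
    calc ‖f z‖ = Real.sqrt (‖f z‖ ^ 2) := (Real.sqrt_sq (norm_nonneg _)).symm
    _ = 1 := by rw [h2, Real.sqrt_one]
  have hzV : z ∈ V := ⟨⟨⟨hzU, hdz⟩, hnsz⟩, hzU⟩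
  have hVnhds : V ∈ nhds z := hVopen.mem_nhds hzV
  -- basic facts on V
  have hmemU : ∀ w ∈ V, w ∈ U := fun w hw => hw.2
  have hd_ne : ∀ w ∈ V, deriv f w ≠ 0 := fun w hw => hw.1.1.2
  have hns_ne : ∀ w ∈ V, normSq (f w) ≠ 1 := fun w hw => hw.1.2
  have ht0 : ∀ w ∈ V, (0:ℝ) - normSq (deriv f w) ≠ 0 := by
    intro w hw
    simp only [zero_sub, neg_ne_zero]
    exact fun h => hd_ne w hw (Complex.normSq_eq_zero.mp h)
  have ht1 : ∀ w ∈ V, (1:ℝ) - normSq (f w) ≠ 0 := by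
    intro w hw
    exact fun h => hns_ne w hw (by linarith [sub_eq_zero.mp h])
  -- the decomposed function
  set E : ℂ → ℝ := fun w => Real.log (2/e) +
      ((1/2) * Real.log (0 - normSq (deriv f w)) + (-1) * Real.log (1 - normSq (f w))) with hEdef
  -- pointwise equality on V
  have hEeq : ∀ w ∈ V, Real.log (Real.sqrt (ρ w)) = E w := by
    intro w hw
    have hA : ‖deriv f w‖ ≠ 0 := norm_ne_zero_iff.mpr (hd_ne w hw)
    have hApos : 0 < ‖deriv f w‖ := norm_pos_iff.mpr (hd_ne w hw)
    have hT : (1:ℝ) - ‖f w‖^2 ≠ 0 := by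
      rw [← hns_norm]; exact ht1 w hw
    have hrw : ρ w = ((2/e) * ‖deriv f w‖ / |1 - ‖f w‖^2|)^2 := by
      rw [hρ w]
      rw [div_pow, mul_pow, div_pow, _root_.sq_abs]
      norm_num
    have hsq : Real.sqrt (ρ w) = (2/e) * ‖deriv f w‖ / |1 - ‖f w‖^2| := by
      rw [hrw]
      exact Real.sqrt_sq (by positivity)
    rw [hsq]
    have h2e : (2:ℝ)/e ≠ 0 := by positivity
    rw [Real.log_div (by positivity) (abs_ne_zero.mpr hT), Real.log_mul h2e hA, Real.log_abs]
    have hlogA : Real.log ‖deriv f w‖ = (1/2) * Real.log (0 - normSq (deriv f w)) := by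
      have : (0:ℝ) - normSq (deriv f w) = -(‖deriv f w‖^2) := by
        rw [Complex.normSq_eq_norm_sq]; ring
      rw [this, Real.log_neg_eq_log, Real.log_pow]
      push_cast
      ring
    have hns : normSq (f w) = ‖f w‖^2 := by
      rw [Complex.normSq_eq_norm_sq]
    rw [hEdef]
    simp only [hns, hlogA]
    ring
  -- replace by E
  have hcong : laplacian (fun w => Real.log (Real.sqrt (ρ w))) z = laplacian E z :=
    laplacian_congr _ _ z (Filter.eventuallyEq_of_mem hVnhds hEeq)
  rw [hcong]
  -- first derivative of E on V
  have hE1 : ∀ w ∈ V, HasFDerivAt E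
      ((1/2:ℝ) • (((0 - normSq (deriv f w))⁻¹ * (-2)) • (Complex.reCLM.comp
        ((ContinuousLinearMap.mul ℝ ℂ ((starRingEnd ℂ) (deriv f w) * deriv (deriv f) w)).restrictScalars ℝ)))
      + (-1:ℝ) • (((1 - normSq (f w))⁻¹ * (-2)) • (Complex.reCLM.comp
        ((ContinuousLinearMap.mul ℝ ℂ ((starRingEnd ℂ) (f w) * deriv f w)).restrictScalars ℝ)))) w := by
    intro w hw
    have h1 := hasFDerivAt_log_normSq (deriv f) 0 w ((hfd w (hmemU w hw)).differentiableAt) (ht0 w hw)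
    have h2 := hasFDerivAt_log_normSq f 1 w ((hfa w (hmemU w hw)).differentiableAt) (ht1 w hw)
    exact ((h1.const_mul (1/2:ℝ)).add (h2.const_mul (-1:ℝ))).const_add (Real.log (2/e))
  -- target function for the first derivative applied to a direction v
  have hfd1 : ∀ v : ℂ, (fun w => fderiv ℝ E w v) =ᶠ[nhds z]
      (fun w => (1/2:ℝ) * (((0 - normSq (deriv f w))⁻¹ * (-2)) *
          (((starRingEnd ℂ) (deriv f w)) * deriv (deriv f) w * v).re)
        + (-1:ℝ) * (((1 - normSq (f w))⁻¹ * (-2)) *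
          (((starRingEnd ℂ) (f w)) * deriv f w * v).re)) := by
    intro v
    refine Filter.eventuallyEq_of_mem hVnhds (fun w hw => ?_)
    rw [(hE1 w hw).fderiv]
    simp [smul_eq_mul]
  -- second derivatives
  have hg1 : DifferentiableAt ℂ (deriv f) z := (hfd z hzU).differentiableAt
  have hg1' : DifferentiableAt ℂ (deriv (deriv f)) z := (hfdd z hzU).differentiableAt
  have hg2 : DifferentiableAt ℂ f z := (hfa z hzU).differentiableAt
  have lap : laplacian E z =
      (1/2:ℝ) * (-4 * 0 * normSq (deriv (deriv f) z) / (0 - normSq (deriv f z))^2)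
      + (-1:ℝ) * (-4 * 1 * normSq (deriv f z) / (1 - normSq (f z))^2) := by
    have key : ∀ v : ℂ, fderiv ℝ (fun w => fderiv ℝ E w v) z v =
        (1/2:ℝ) * ((-4 * ((0 - normSq (deriv f z))⁻¹)^2 * ((starRingEnd ℂ) (deriv f z) * deriv (deriv f) z * v).re)
              * ((starRingEnd ℂ) (deriv f z) * deriv (deriv f) z * v).re
            + ((0 - normSq (deriv f z))⁻¹ * (-2)) *
              (((starRingEnd ℂ) (v * deriv (deriv f) z) * deriv (deriv f) z * v).re
                + ((starRingEnd ℂ) (deriv f z) * (v * deriv (deriv (deriv f)) z) * v).re))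
        + (-1:ℝ) * ((-4 * ((1 - normSq (f z))⁻¹)^2 * ((starRingEnd ℂ) (f z) * deriv f z * v).re)
              * ((starRingEnd ℂ) (f z) * deriv f z * v).re
            + ((1 - normSq (f z))⁻¹ * (-2)) *
              (((starRingEnd ℂ) (v * deriv f z) * deriv f z * v).re
                + ((starRingEnd ℂ) (f z) * (v * deriv (deriv f) z) * v).re)) := by
      intro v
      obtain ⟨D1, hD1, hD1u⟩ := second_aux (deriv f) 0 z hg1 hg1' (ht0 z hzV) v v
      obtain ⟨D2, hD2, hD2u⟩ := second_aux f 1 z hg2 hg1 (ht1 z hzV) v v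
      rw [(hfd1 v).fderiv_eq]
      have hD1' : HasFDerivAt (fun w => ((0 - normSq (deriv f w))⁻¹ * (-2)) *
          (((starRingEnd ℂ) (deriv f w)) * deriv (deriv f) w * v).re) D1 z := by
        rw [coord_eq (deriv f) 0 v]; exact hD1
      have hD2' : HasFDerivAt (fun w => ((1 - normSq (f w))⁻¹ * (-2)) *
          (((starRingEnd ℂ) (f w)) * deriv f w * v).re) D2 z := by
        rw [coord_eq f 1 v]; exact hD2
      have H := (hD1'.const_mul (1/2:ℝ)).add (hD2'.const_mul (-1:ℝ))
      simp only [Pi.add_def] at H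
      rw [H.fderiv]
      simp only [ContinuousLinearMap.add_apply, ContinuousLinearMap.smul_apply, smul_eq_mul]
      rw [hD1u, hD2u]
    unfold laplacian
    rw [key 1, key Complex.I]
    have e1 := second_eval (deriv f) 0 z (ht0 z hzV)
    have e2 := second_eval f 1 z (ht1 z hzV)
    linarith [e1, e2]
  rw [lap, hρ z]
  have hns : normSq (f z) = ‖f z‖^2 := by
    rw [Complex.normSq_eq_norm_sq]
  have hnd : normSq (deriv f z) = ‖deriv f z‖^2 := by
    rw [Complex.normSq_eq_norm_sq]
  rw [hns, hnd]
  have hT : (1:ℝ) - ‖f z‖^2 ≠ 0 := by rw [← hns]; exact ht1 z hzV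
  have he' : e ≠ 0 := ne_of_gt he
  have h4 : e^2 * (4/e^2 * ‖deriv f z‖^2 / (1-‖f z‖^2)^2) = 4*‖deriv f z‖^2/(1-‖f z‖^2)^2 := by
    field_simp
  rw [h4]
  ring
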